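/- arXiv:2012.07650 — 6 statements merged into one kernel-verified Lean document; each statement's English description precedes it below -/
import Mathlib

section
/- For all x, y in ℝ^n and 1 < p < 2, there exists a constant c_p > 0 (depending only on p) such that ⟨|x|^{p-2}x - |y|^{p-2}y, x - y⟩ ≥ c_p |x - y|^2 (|x| + |y|)^{p-2}, whenever (x,y) ≠ (0,0). -/
private lemma rpow_mul_self_aux {a : ℝ} (ha : 0 ≤ a) {q : ℝ} (hq : q + 1 ≠ 0) :
    a ^ q * a = a ^ (q + 1) := by
  rcases eq_or_lt_of_le ha with h | h
  · rw [← h, Real.zero_rpow hq, mul_zero]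
  · rw [Real.rpow_add_one h.ne' q]

private lemma bern_aux {q a b : ℝ} (hq0 : 0 ≤ q) (hq1 : q ≤ 1) (ha : 0 < a) (hb : 0 ≤ b) :
    b ^ q ≤ a ^ q + q * a ^ (q - 1) * (b - a) := by
  have hba : (0:ℝ) ≤ b / a := div_nonneg hb ha.le
  have hs : (-1:ℝ) ≤ b / a - 1 := by linarith
  have h := _root_.rpow_one_add_le_one_add_mul_self hs hq0 hq1
  rw [show (1 : ℝ) + (b / a - 1) = b / a by ring, Real.div_rpow hb ha.le] at h
  have haq : 0 < a ^ q := Real.rpow_pos_of_pos ha q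
  have h2 : b ^ q ≤ a ^ q * (1 + q * (b / a - 1)) := by
    have := mul_le_mul_of_nonneg_left h haq.le
    calc b ^ q = a ^ q * (b ^ q / a ^ q) := by field_simp
    _ ≤ a ^ q * (1 + q * (b / a - 1)) := this
  have h3 : a ^ (q - 1) = a ^ q / a := by
    rw [Real.rpow_sub ha, Real.rpow_one]
  rw [h3]
  refine h2.trans_eq ?_
  field_simp

private lemma subadd_aux {q a b : ℝ} (hq0 : 0 ≤ q) (hq1 : q ≤ 1) (ha : 0 ≤ a) (hb : 0 ≤ b) :
    (a + b) ^ q ≤ a ^ q + b ^ q := by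
  have h := NNReal.rpow_add_le_add_rpow a.toNNReal b.toNNReal hq0 hq1
  have := NNReal.coe_le_coe.2 h
  push_cast [NNReal.coe_rpow] at this
  rwa [Real.coe_toNNReal a ha, Real.coe_toNNReal b hb] at this

/-- endpoint t = -ab -/
private lemma E2_aux {p a b : ℝ} (hp1 : 1 < p) (hp2 : p < 2) (ha : 0 ≤ a) (hb : 0 ≤ b)
    (hab : 0 < a + b) :
    (p-1) * (a+b)^2 * (a+b)^(p-2) ≤ a^p + b^p + (a^(p-2) + b^(p-2)) * (a*b) := by
  have hpow : (a+b)^2 * (a+b)^(p-2) = (a+b)^(p-1) * (a+b) := by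
    rw [← Real.rpow_natCast (a+b) 2, ← Real.rpow_add hab, ← Real.rpow_add_one hab.ne']
    norm_num
  have hA : a^(p-2) * (a*b) = a^(p-1) * b := by
    rw [← mul_assoc, rpow_mul_self_aux ha (by intro h; nlinarith),
      show p - 2 + 1 = p - 1 from by ring]
  have hB : b^(p-2) * (a*b) = b^(p-1) * a := by
    rw [show a*b = b*a by ring, ← mul_assoc, rpow_mul_self_aux hb (by intro h; nlinarith),
      show p - 2 + 1 = p - 1 from by ring]
  have hap : a^p = a^(p-1) * a := by
    rw [rpow_mul_self_aux ha (by intro h; nlinarith), show p - 1 + 1 = p from by ring]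
  have hbp : b^p = b^(p-1) * b := by
    rw [rpow_mul_self_aux hb (by intro h; nlinarith), show p - 1 + 1 = p from by ring]
  have hsub : (a+b)^(p-1) ≤ a^(p-1) + b^(p-1) :=
    subadd_aux (by linarith) (by linarith) ha hb
  have hP : 0 ≤ (a+b)^(p-1) := Real.rpow_nonneg (by linarith) _
  rw [mul_assoc, hpow, add_mul, hA, hB, hap, hbp]
  nlinarith [mul_le_mul_of_nonneg_right hsub (by linarith : (0:ℝ) ≤ a + b),
    mul_nonneg hP (by linarith : (0:ℝ) ≤ a + b)]

/-- endpoint t = ab, assuming b ≤ a -/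
private lemma E1_aux {p a b : ℝ} (hp1 : 1 < p) (hp2 : p < 2) (hb : 0 ≤ b) (hba : b ≤ a)
    (ha : 0 < a) :
    (p-1) * (a-b)^2 * (a+b)^(p-2) ≤ a^p + b^p - (a^(p-2) + b^(p-2)) * (a*b) := by
  have hA : a^(p-2) * (a*b) = a^(p-1) * b := by
    rw [← mul_assoc, rpow_mul_self_aux ha.le (by intro h; nlinarith),
      show p - 2 + 1 = p - 1 from by ring]
  have hB : b^(p-2) * (a*b) = b^(p-1) * a := by
    rw [show a*b = b*a by ring, ← mul_assoc, rpow_mul_self_aux hb (by intro h; nlinarith),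
      show p - 2 + 1 = p - 1 from by ring]
  have hap : a^p = a^(p-1) * a := by
    rw [rpow_mul_self_aux ha.le (by intro h; nlinarith), show p - 1 + 1 = p from by ring]
  have hbp : b^p = b^(p-1) * b := by
    rw [rpow_mul_self_aux hb (by intro h; nlinarith), show p - 1 + 1 = p from by ring]
  have hbern : b^(p-1) ≤ a^(p-1) + (p-1) * a^(p-2) * (b - a) := by
    have := bern_aux (q := p-1) (by linarith) (by linarith) ha hb
    rwa [show p - 1 - 1 = p - 2 by ring] at this
  have hmono : (a+b)^(p-2) ≤ a^(p-2) :=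
    Real.rpow_le_rpow_of_nonpos ha (by linarith) (by linarith)
  have hPn : 0 ≤ (a+b)^(p-2) := Real.rpow_nonneg (by linarith) _
  rw [add_mul, hA, hB, hap, hbp]
  nlinarith [mul_le_mul_of_nonneg_left hmono
      (mul_nonneg (by linarith : (0:ℝ) ≤ p-1) (sq_nonneg (a-b))),
    mul_le_mul_of_nonneg_left hbern (by linarith : (0:ℝ) ≤ a - b)]

private lemma key_aux' {p a b t : ℝ} (hp1 : 1 < p) (hp2 : p < 2) (hb : 0 ≤ b) (hba : b ≤ a)
    (hab : 0 < a + b) (ht1 : -(a*b) ≤ t) (ht2 : t ≤ a*b) :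
    (p-1) * (a^2 + b^2 - 2*t) * (a+b)^(p-2) ≤ a^p + b^p - (a^(p-2) + b^(p-2)) * t := by
  have ha : 0 < a := by linarith
  have hE1 := E1_aux hp1 hp2 hb hba ha
  have hE2 := E2_aux hp1 hp2 ha.le hb hab
  set P := (a+b)^(p-2) with hP
  set A := a^(p-2) with hA
  set B := b^(p-2) with hB
  have hPn : 0 ≤ P := Real.rpow_nonneg (by linarith) _
  rcases le_or_gt 0 (2*(p-1)*P - (A+B)) with hK | hK
  · nlinarith [mul_nonneg hK (by linarith : (0:ℝ) ≤ t + a*b)]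
  · nlinarith [mul_nonneg (by linarith : (0:ℝ) ≤ (A+B) - 2*(p-1)*P)
      (by linarith : (0:ℝ) ≤ a*b - t)]

private lemma key_aux {p a b t : ℝ} (hp1 : 1 < p) (hp2 : p < 2) (ha : 0 ≤ a) (hb : 0 ≤ b)
    (hab : 0 < a + b) (ht1 : -(a*b) ≤ t) (ht2 : t ≤ a*b) :
    (p-1) * (a^2 + b^2 - 2*t) * (a+b)^(p-2) ≤ a^p + b^p - (a^(p-2) + b^(p-2)) * t := by
  rcases le_total b a with h | h
  · exact key_aux' hp1 hp2 hb h hab ht1 ht2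
  · have hc : b * a = a * b := mul_comm b a
    have := key_aux' (t := t) hp1 hp2 ha h (by linarith) (by rw [hc]; exact ht1) (by rw [hc]; exact ht2)
    calc (p-1) * (a^2 + b^2 - 2*t) * (a+b)^(p-2)
        = (p-1) * (b^2 + a^2 - 2*t) * (b+a)^(p-2) := by ring_nf
      _ ≤ b^p + a^p - (b^(p-2) + a^(p-2)) * t := this
      _ = a^p + b^p - (a^(p-2) + b^(p-2)) * t := by ring

/-- Monotonicity of the p-Laplacian vector field for `1 < p < 2`. -/
theorem monotonicity_pLaplacian_singular (n : ℕ) (p : ℝ) (hp1 : 1 < p) (hp2 : p < 2) :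
    ∃ c : ℝ, 0 < c ∧ ∀ x y : EuclideanSpace ℝ (Fin n), ¬(x = 0 ∧ y = 0) →
      c * ‖x - y‖ ^ (2 : ℝ) * (‖x‖ + ‖y‖) ^ (p - 2)
        ≤ (inner ℝ ((‖x‖ ^ (p - 2)) • x - (‖y‖ ^ (p - 2)) • y) (x - y) : ℝ) := by
  refine ⟨p - 1, by linarith, fun x y hxy => ?_⟩
  set a := ‖x‖ with hadef
  set b := ‖y‖ with hbdef
  set t := (inner ℝ x y : ℝ) with htdef
  have ha : 0 ≤ a := norm_nonneg x
  have hb : 0 ≤ b := norm_nonneg y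
  have hab : 0 < a + b := by
    rcases eq_or_lt_of_le ha with h | h
    · rcases eq_or_lt_of_le hb with h' | h'
      · exfalso; exact hxy ⟨norm_eq_zero.mp h.symm, norm_eq_zero.mp h'.symm⟩
      · linarith
    · linarith
  have hcs := abs_real_inner_le_norm x y
  have ht2 : t ≤ a * b := le_of_abs_le hcs
  have ht1 : -(a*b) ≤ t := neg_le_of_abs_le hcs
  -- compute the inner product
  have hinner : (inner ℝ ((a ^ (p - 2)) • x - (b ^ (p - 2)) • y) (x - y) : ℝ)
      = a^p + b^p - (a^(p-2) + b^(p-2)) * t := by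
    have expand : (inner ℝ ((a ^ (p - 2)) • x - (b ^ (p - 2)) • y) (x - y) : ℝ)
        = a^(p-2) * (‖x‖^2 - (inner ℝ x y : ℝ)) - b^(p-2) * ((inner ℝ x y : ℝ) - ‖y‖^2) := by
      rw [inner_sub_left, real_inner_smul_left, real_inner_smul_left,
        inner_sub_right, inner_sub_right, real_inner_self_eq_norm_sq,
        real_inner_self_eq_norm_sq, real_inner_comm y x]
    have hax : a^(p-2) * a^2 = a^p := by
      rcases eq_or_lt_of_le ha with h | h
      · rw [← h]; rw [Real.zero_rpow (by intro hc; nlinarith), Real.zero_rpow (by linarith : p ≠ 0), zero_mul]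
      · rw [← Real.rpow_natCast a 2, ← Real.rpow_add h]; norm_num
    have hbx : b^(p-2) * b^2 = b^p := by
      rcases eq_or_lt_of_le hb with h | h
      · rw [← h]; rw [Real.zero_rpow (by intro hc; nlinarith), Real.zero_rpow (by linarith : p ≠ 0), zero_mul]
      · rw [← Real.rpow_natCast b 2, ← Real.rpow_add h]; norm_num
    rw [expand, ← hadef, ← hbdef, ← htdef, ← hax, ← hbx]
    ring
  rw [hinner]
  have hnorm : ‖x - y‖ ^ (2:ℝ) = a^2 + b^2 - 2*t := by
    rw [show (2:ℝ) = ((2:ℕ):ℝ) by norm_num, Real.rpow_natCast]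
    rw [@norm_sub_sq_real]
    ring
  rw [hnorm]
  exact key_aux hp1 hp2 ha hb hab ht1 ht2
end

section
/- For all x, y in ℝ^n and 1 < p < 2, ⟨|x|^{p-2}x - |y|^{p-2}y, x - y⟩ ≥ c_p |x - y|^2 (1 + |x| + |y|)^{p-2} for some constant c_p > 0 depending only on p. -/
open Real Set

private lemma pLap_lemA {p : ℝ} (hp1 : 1 < p) (hp2 : p < 2) {a b : ℝ} (hb : 0 ≤ b) (hab : b < a) :
    (p - 1) * (a - b) * (a + b) ^ (p - 2) ≤ a ^ (p - 1) - b ^ (p - 1) := by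
  have ha : 0 < a := lt_of_le_of_lt hb hab
  obtain ⟨ξ, hξ, hderiv⟩ := exists_hasDerivAt_eq_slope (fun t => t ^ (p - 1))
    (fun t => (p - 1) * t ^ (p - 1 - 1)) hab
    (fun t ht => (Real.continuousAt_rpow_const t (p - 1)
      (Or.inr (by linarith))).continuousWithinAt)
    (fun t ht => Real.hasDerivAt_rpow_const (Or.inl (ne_of_gt (lt_of_le_of_lt hb ht.1))))
  have hξ0 : 0 < ξ := lt_of_le_of_lt hb hξ.1
  have hkey : (a + b) ^ (p - 2) ≤ ξ ^ (p - 2) :=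
    Real.rpow_le_rpow_of_nonpos hξ0 (by linarith [hξ.2]) (by linarith)
  have hslope : (p - 1) * ξ ^ (p - 1 - 1) = (a ^ (p - 1) - b ^ (p - 1)) / (a - b) := hderiv
  rw [show p - 1 - 1 = p - 2 by ring] at hslope
  have h1 : (p - 1) * (a + b) ^ (p - 2) ≤ (a ^ (p - 1) - b ^ (p - 1)) / (a - b) := by
    rw [← hslope]
    have : 0 < p - 1 := by linarith
    nlinarith
  calc (p - 1) * (a - b) * (a + b) ^ (p - 2)
      = ((p - 1) * (a + b) ^ (p - 2)) * (a - b) := by ring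
    _ ≤ ((a ^ (p - 1) - b ^ (p - 1)) / (a - b)) * (a - b) :=
        mul_le_mul_of_nonneg_right h1 (by linarith)
    _ = a ^ (p - 1) - b ^ (p - 1) := div_mul_cancel₀ _ (by linarith)

private lemma pLap_lemA' {p : ℝ} (hp1 : 1 < p) (hp2 : p < 2) {a b : ℝ} (ha : 0 ≤ a) (hb : 0 ≤ b) :
    (p - 1) * (a - b) ^ 2 * (a + b) ^ (p - 2) ≤ (a ^ (p - 1) - b ^ (p - 1)) * (a - b) := by
  rcases lt_trichotomy a b with h | h | h
  · have h1 := pLap_lemA hp1 hp2 ha h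
    rw [add_comm b a] at h1
    have h2 := mul_le_mul_of_nonneg_right h1 (by linarith : (0:ℝ) ≤ b - a)
    nlinarith [h2]
  · subst h; simp
  · have h1 := pLap_lemA hp1 hp2 hb h
    have h2 := mul_le_mul_of_nonneg_right h1 (by linarith : (0:ℝ) ≤ a - b)
    nlinarith [h2]

private lemma pLap_lemB {p : ℝ} (hp1 : 1 < p) (hp2 : p < 2) {a b : ℝ} (ha : 0 ≤ a) (hb : 0 ≤ b) :
    (a + b) ^ (p - 1) ≤ a ^ (p - 1) + b ^ (p - 1) := by
  lift a to NNReal using ha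
  lift b to NNReal using hb
  have h := NNReal.rpow_add_le_add_rpow a b (p := p - 1) (by linarith) (by linarith)
  have h2 : ((a + b : NNReal) : ℝ) ^ (p - 1) ≤ ((a ^ (p-1) + b ^ (p-1) : NNReal) : ℝ) := by
    exact_mod_cast h
  push_cast [NNReal.coe_rpow] at h2 ⊢
  exact h2

private lemma rpow_mul_self {p : ℝ} (hp : p ≠ 0) {a : ℝ} (ha : 0 ≤ a) :
    a * a ^ (p - 1) = a ^ p := by
  rcases eq_or_lt_of_le ha with h | h
  · rw [← h]
    simp [Real.zero_rpow hp]
  · calc a * a ^ (p - 1) = a ^ (1:ℝ) * a ^ (p - 1) := by rw [Real.rpow_one]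
      _ = a ^ (1 + (p - 1)) := (Real.rpow_add h 1 (p - 1)).symm
      _ = a ^ p := by ring_nf

private lemma pLap_scalar {p : ℝ} (hp1 : 1 < p) (hp2 : p < 2) {a b t : ℝ}
    (ha : 0 ≤ a) (hb : 0 ≤ b) (ht : |t| ≤ a * b) :
    (p - 1) * (a ^ 2 + b ^ 2 - 2 * t) * (a + b) ^ (p - 2)
      ≤ a ^ (p - 2) * a ^ 2 + b ^ (p - 2) * b ^ 2 - (a ^ (p - 2) + b ^ (p - 2)) * t := by
  have hp20 : p - 2 ≠ 0 := by intro h; linarith [sub_eq_zero.mp h]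
  have hp10 : p - 1 ≠ 0 := by intro h; linarith [sub_eq_zero.mp h]
  have hma : a * a ^ (p - 2) = a ^ (p - 1) := by
    have h := rpow_mul_self (p := p - 1) hp10 ha; rw [show p - 1 - 1 = p - 2 by ring] at h
    exact h
  have hmb : b * b ^ (p - 2) = b ^ (p - 1) := by
    have h := rpow_mul_self (p := p - 1) hp10 hb; rw [show p - 1 - 1 = p - 2 by ring] at h
    exact h
  have hma2 : a ^ (p - 2) * a ^ 2 = a * a ^ (p - 1) := by nlinarith [hma]
  have hmb2 : b ^ (p - 2) * b ^ 2 = b * b ^ (p - 1) := by nlinarith [hmb]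
  have hmab : (a + b) * (a + b) ^ (p - 2) = (a + b) ^ (p - 1) := by
    have h := rpow_mul_self (p := p - 1) hp10 (by linarith : (0:ℝ) ≤ a + b)
    rw [show p - 1 - 1 = p - 2 by ring] at h; exact h
  have E1 : 0 ≤ a ^ (p-2) * a^2 + b ^ (p-2) * b^2 - (a ^ (p-2) + b ^ (p-2)) * (a*b)
      - (p - 1) * (a^2 + b^2 - 2*(a*b)) * (a + b) ^ (p - 2) := by
    have h := pLap_lemA' hp1 hp2 ha hb
    have expand : a ^ (p-2) * a^2 + b ^ (p-2) * b^2 - (a ^ (p-2) + b ^ (p-2)) * (a*b)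
        = (a ^ (p-1) - b ^ (p-1)) * (a - b) := by
      rw [hma2, hmb2]; nlinarith [hma, hmb]
    rw [expand]
    nlinarith [h]
  have E2 : 0 ≤ a ^ (p-2) * a^2 + b ^ (p-2) * b^2 + (a ^ (p-2) + b ^ (p-2)) * (a*b)
      - (p - 1) * (a^2 + b^2 + 2*(a*b)) * (a + b) ^ (p - 2) := by
    have h := pLap_lemB hp1 hp2 ha hb
    have expand : a ^ (p-2) * a^2 + b ^ (p-2) * b^2 + (a ^ (p-2) + b ^ (p-2)) * (a*b)
        = (a ^ (p-1) + b ^ (p-1)) * (a + b) := by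
      rw [hma2, hmb2]; nlinarith [hma, hmb]
    have expand2 : (a^2 + b^2 + 2*(a*b)) * (a + b) ^ (p - 2) = (a + b) * (a + b) ^ (p - 1) := by
      rw [← hmab]; ring
    have hab : (0:ℝ) ≤ a + b := by linarith
    have hZ : 0 ≤ (a + b) * (a + b) ^ (p - 1) :=
      mul_nonneg hab (Real.rpow_nonneg hab _)
    have hZW := mul_le_mul_of_nonneg_left h hab
    rw [expand]
    nlinarith [expand2, hZ, hZW]
  have ht1 : t ≤ a * b := (abs_le.mp ht).2
  have ht2 : -(a * b) ≤ t := (abs_le.mp ht).1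
  rcases le_or_gt 0 (2 * (p - 1) * (a + b) ^ (p - 2) - (a ^ (p-2) + b ^ (p-2))) with hm | hm
  · nlinarith [E2, mul_le_mul_of_nonneg_left ht2 hm]
  · nlinarith [E1, ht1, hm]

/-- Monotonicity of the p-Laplacian vector field for `1 < p < 2`, weak form. -/
theorem monotonicity_pLaplacian_singular_weak (n : ℕ) (p : ℝ) (hp1 : 1 < p) (hp2 : p < 2) :
    ∃ c : ℝ, 0 < c ∧ ∀ x y : EuclideanSpace ℝ (Fin n),
      c * ‖x - y‖ ^ (2 : ℝ) * (1 + ‖x‖ + ‖y‖) ^ (p - 2)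
        ≤ (inner ℝ ((‖x‖ ^ (p - 2)) • x - (‖y‖ ^ (p - 2)) • y) (x - y) : ℝ) := by
  refine ⟨p - 1, by linarith, fun x y => ?_⟩
  have ha : (0:ℝ) ≤ ‖x‖ := norm_nonneg x
  have hb : (0:ℝ) ≤ ‖y‖ := norm_nonneg y
  have ht : |(inner ℝ x y : ℝ)| ≤ ‖x‖ * ‖y‖ := abs_real_inner_le_norm x y
  have hinner : (inner ℝ ((‖x‖ ^ (p - 2)) • x - (‖y‖ ^ (p - 2)) • y) (x - y) : ℝ)
      = ‖x‖ ^ (p-2) * ‖x‖^2 + ‖y‖ ^ (p-2) * ‖y‖^2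
        - (‖x‖ ^ (p-2) + ‖y‖ ^ (p-2)) * (inner ℝ x y : ℝ) := by
    simp only [inner_sub_left, inner_sub_right, real_inner_smul_left,
      real_inner_self_eq_norm_sq, real_inner_comm y x]
    ring
  have hnorm : ‖x - y‖ ^ (2:ℝ) = ‖x‖^2 + ‖y‖^2 - 2 * (inner ℝ x y : ℝ) := by
    rw [Real.rpow_two, norm_sub_sq_real]
    ring
  rw [hinner, hnorm]
  rcases eq_or_lt_of_le (by linarith : (0:ℝ) ≤ ‖x‖ + ‖y‖) with hab | hab
  · have ha0 : ‖x‖ = 0 := by linarith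
    have hb0 : ‖y‖ = 0 := by linarith
    have ht0 : (inner ℝ x y : ℝ) = 0 := by
      have h : |(inner ℝ x y : ℝ)| ≤ 0 := by rw [ha0, hb0] at ht; simpa using ht
      exact abs_nonpos_iff.mp h
    rw [ha0, hb0, ht0, Real.zero_rpow (by intro h; linarith [sub_eq_zero.mp h] : p - 2 ≠ 0)]
    simp
  · have step1 : (1 + ‖x‖ + ‖y‖) ^ (p - 2) ≤ (‖x‖ + ‖y‖) ^ (p - 2) :=
      Real.rpow_le_rpow_of_nonpos hab (by linarith) (by linarith)
    have hsq : (0:ℝ) ≤ ‖x‖^2 + ‖y‖^2 - 2 * (inner ℝ x y : ℝ) := by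
      rw [← hnorm]
      exact Real.rpow_nonneg (norm_nonneg _) _
    calc (p - 1) * (‖x‖^2 + ‖y‖^2 - 2 * (inner ℝ x y : ℝ)) * (1 + ‖x‖ + ‖y‖) ^ (p - 2)
        ≤ (p - 1) * (‖x‖^2 + ‖y‖^2 - 2 * (inner ℝ x y : ℝ)) * (‖x‖ + ‖y‖) ^ (p - 2) :=
          mul_le_mul_of_nonneg_left step1 (mul_nonneg (by linarith) hsq)
      _ ≤ _ := pLap_scalar hp1 hp2 ha hb ht
end

section
/- For all x, y in ℝ^n and p ≥ 2, there exists c_p > 0 depending only on p such that |y|^p ≥ |x|^p + p |x|^{p-2} ⟨x, y - x⟩ + c_p |y - x|^p. -/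
open Real

/-- superadditivity of rpow for exponent ≥ 1 on nonneg reals -/
lemma aux_superadd {a b q : ℝ} (ha : 0 ≤ a) (hb : 0 ≤ b) (hq : 1 ≤ q) :
    a ^ q + b ^ q ≤ (a + b) ^ q := by
  have := NNReal.add_rpow_le_rpow_add (⟨a, ha⟩ : NNReal) (⟨b, hb⟩ : NNReal) hq
  have h2 := NNReal.coe_le_coe.2 this
  exact h2

/-- power mean inequality for two points -/
lemma aux_mean2 {a b q : ℝ} (ha : 0 ≤ a) (hb : 0 ≤ b) (hq : 1 ≤ q) :
    ((a + b) / 2) ^ q ≤ (a ^ q + b ^ q) / 2 := by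
  have h := (convexOn_rpow hq).2 (Set.mem_Ici.2 ha) (Set.mem_Ici.2 hb)
    (by norm_num : (0:ℝ) ≤ 1/2) (by norm_num : (0:ℝ) ≤ 1/2) (by norm_num)
  simp only [smul_eq_mul] at h
  calc ((a + b) / 2) ^ q = (1/2 * a + 1/2 * b) ^ q := by ring_nf
    _ ≤ 1/2 * a ^ q + 1/2 * b ^ q := h
    _ = (a ^ q + b ^ q) / 2 := by ring

/-- tangent line inequality for rpow -/
lemma aux_tangent {a b q : ℝ} (ha : 0 ≤ a) (hb : 0 ≤ b) (hq : 1 ≤ q) :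
    a ^ q + q * a ^ (q - 1) * (b - a) ≤ b ^ q := by
  rcases eq_or_lt_of_le ha with h0 | h0
  · have hq0 : q ≠ 0 := by linarith
    have hq1 : q - 1 ≠ 0 ∨ (0:ℝ) < q - 1 ∨ True := Or.inr (Or.inr trivial)
    rcases eq_or_lt_of_le hq with hq1 | hq1
    · subst h0; rw [← hq1]; simp
    · subst h0
      rw [zero_rpow hq0, zero_rpow (by linarith : q - 1 ≠ 0)]
      simpa using rpow_nonneg hb q
  · obtain ⟨s, hs⟩ : ∃ s, s = b / a - 1 := ⟨_, rfl⟩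
    have hs1 : -1 ≤ s := by
      have : 0 ≤ b / a := div_nonneg hb h0.le
      rw [hs]; linarith
    have hber := one_add_mul_self_le_rpow_one_add hs1 hq
    have hab : a * (1 + s) = b := by rw [hs]; field_simp; ring
    have hpow : a ^ q * (1 + s) ^ q = b ^ q := by
      rw [← mul_rpow h0.le (by linarith), hab]
    have h1 : a ^ q * (1 + q * s) ≤ a ^ q * (1 + s) ^ q :=
      mul_le_mul_of_nonneg_left hber (rpow_nonneg h0.le q)
    rw [hpow] at h1
    have h2 : a ^ q * (1 + q * s) = a ^ q + q * a ^ (q - 1) * (b - a) := by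
      have hA : a ^ q = a ^ (q - 1) * a := by
        rw [← rpow_add_one h0.ne' (q-1)]; ring_nf
      rw [hA, hs]; field_simp
    linarith [h1, h2.symm.le]

/-- p-uniform convexity inequality for `s ↦ |s|^p`, `p ≥ 2`. -/
theorem uniform_convexity_pow_norm (n : ℕ) (p : ℝ) (hp : 2 ≤ p) :
    ∃ c : ℝ, 0 < c ∧ ∀ x y : EuclideanSpace ℝ (Fin n),
      ‖x‖ ^ p + p * ‖x‖ ^ (p - 2) * (inner ℝ x (y - x) : ℝ) + c * ‖y - x‖ ^ p ≤ ‖y‖ ^ p := by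
  have hp0 : (0:ℝ) < p := by linarith
  refine ⟨(2:ℝ) ^ (1 - p), rpow_pos_of_pos two_pos _, fun x y => ?_⟩
  by_cases hx : x = 0
  · subst hx
    simp only [inner_zero_left, norm_zero, mul_zero, sub_zero, zero_rpow hp0.ne', zero_add]
    have hc1 : (2:ℝ) ^ (1 - p) ≤ 1 := by
      have := rpow_le_one_of_one_le_of_nonpos (by norm_num : (1:ℝ) ≤ 2) (by linarith : 1 - p ≤ 0)
      exact this
    have := mul_le_mul_of_nonneg_right hc1 (rpow_nonneg (norm_nonneg y) p)
    simpa using this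
  · have hxn : (0:ℝ) < ‖x‖ := norm_pos_iff.2 hx
    set m : EuclideanSpace ℝ (Fin n) := (2:ℝ)⁻¹ • (x + y) with hmdef
    set d : EuclideanSpace ℝ (Fin n) := (2:ℝ)⁻¹ • (y - x) with hddef
    -- Step B: first-order convexity at x evaluated at m
    have hmx : m - x = (2:ℝ)⁻¹ • (y - x) := by
      rw [hmdef]; rw [smul_add]; module
    have hinner : (inner ℝ x (m - x) : ℝ) = (2:ℝ)⁻¹ * (inner ℝ x (y - x) : ℝ) := by
      rw [hmx, real_inner_smul_right]
    have hB : ‖x‖ ^ p + p * ‖x‖ ^ (p - 2) * (inner ℝ x (m - x) : ℝ) ≤ ‖m‖ ^ p := by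
      have h1 : (inner ℝ x (m - x) : ℝ) ≤ ‖x‖ * ‖m‖ - ‖x‖ * ‖x‖ := by
        have := real_inner_le_norm x m
        have h2 : (inner ℝ x (m - x) : ℝ) = (inner ℝ x m : ℝ) - ‖x‖ * ‖x‖ := by
          rw [inner_sub_right, real_inner_self_eq_norm_mul_norm]
        linarith
      have hcoef : 0 ≤ p * ‖x‖ ^ (p - 2) := mul_nonneg hp0.le (rpow_nonneg hxn.le _)
      have h3 : p * ‖x‖ ^ (p - 2) * (inner ℝ x (m - x) : ℝ)
          ≤ p * ‖x‖ ^ (p - 2) * (‖x‖ * ‖m‖ - ‖x‖ * ‖x‖) :=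
        mul_le_mul_of_nonneg_left h1 hcoef
      have h4 : ‖x‖ ^ (p - 2) * (‖x‖ * ‖m‖ - ‖x‖ * ‖x‖) = ‖x‖ ^ (p - 1) * (‖m‖ - ‖x‖) := by
        have hA : ‖x‖ ^ (p - 1) = ‖x‖ ^ (p - 2) * ‖x‖ := by
          rw [← rpow_add_one hxn.ne' (p - 2)]; ring_nf
        rw [hA]; ring
      have h5 := aux_tangent hxn.le (norm_nonneg m) (by linarith : 1 ≤ p)
      calc ‖x‖ ^ p + p * ‖x‖ ^ (p - 2) * (inner ℝ x (m - x) : ℝ)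
          ≤ ‖x‖ ^ p + p * ‖x‖ ^ (p - 2) * (‖x‖ * ‖m‖ - ‖x‖ * ‖x‖) := by linarith
        _ = ‖x‖ ^ p + p * ‖x‖ ^ (p - 1) * (‖m‖ - ‖x‖) := by rw [mul_assoc, h4, ← mul_assoc]
        _ ≤ ‖m‖ ^ p := h5
    -- Step A: midpoint p-uniform convexity with constant 1
    have hsq : ∀ v : EuclideanSpace ℝ (Fin n), (‖v‖ * ‖v‖) ^ (p / 2) = ‖v‖ ^ p := by
      intro v
      rw [show (‖v‖ * ‖v‖) = ‖v‖ ^ ((2:ℕ):ℝ) from by rw [Real.rpow_natCast]; ring,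
        ← Real.rpow_mul (norm_nonneg v), show ((2:ℕ):ℝ) * (p / 2) = p by push_cast; ring]
    have hpar : ‖m‖ * ‖m‖ + ‖d‖ * ‖d‖ = (‖x‖ * ‖x‖ + ‖y‖ * ‖y‖) / 2 := by
      have hpl := parallelogram_law_with_norm ℝ x y
      have hm2 : ‖m‖ = (2:ℝ)⁻¹ * ‖x + y‖ := by
        rw [hmdef, norm_smul]; norm_num
      have hd2 : ‖d‖ = (2:ℝ)⁻¹ * ‖x - y‖ := by
        rw [hddef, norm_smul, ← norm_neg (y - x), neg_sub y x]; norm_num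
      rw [hm2, hd2]; nlinarith [hpl]
    have hq2 : (1:ℝ) ≤ p / 2 := by linarith
    have hA : ‖m‖ ^ p + ‖d‖ ^ p ≤ (‖x‖ ^ p + ‖y‖ ^ p) / 2 := by
      calc ‖m‖ ^ p + ‖d‖ ^ p = (‖m‖ * ‖m‖) ^ (p/2) + (‖d‖ * ‖d‖) ^ (p/2) := by
            rw [hsq m, hsq d]
        _ ≤ (‖m‖ * ‖m‖ + ‖d‖ * ‖d‖) ^ (p/2) :=
            aux_superadd (mul_self_nonneg _) (mul_self_nonneg _) hq2
        _ = ((‖x‖ * ‖x‖ + ‖y‖ * ‖y‖) / 2) ^ (p/2) := by rw [hpar]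
        _ ≤ ((‖x‖ * ‖x‖) ^ (p/2) + (‖y‖ * ‖y‖) ^ (p/2)) / 2 :=
            aux_mean2 (mul_self_nonneg _) (mul_self_nonneg _) hq2
        _ = (‖x‖ ^ p + ‖y‖ ^ p) / 2 := by rw [hsq x, hsq y]
    -- Combine
    have hdnorm : ‖d‖ ^ p = (2:ℝ) ^ (-p) * ‖y - x‖ ^ p := by
      have : ‖d‖ = (2:ℝ)⁻¹ * ‖y - x‖ := by rw [hddef, norm_smul]; norm_num
      rw [this, mul_rpow (by norm_num) (norm_nonneg _),
        Real.inv_rpow (by norm_num : (0:ℝ) ≤ 2), ← Real.rpow_neg (by norm_num : (0:ℝ) ≤ 2)]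
    have hc : (2:ℝ) ^ (1 - p) = 2 * (2:ℝ) ^ (-p) := by
      rw [show (1 - p) = 1 + (-p) by ring, Real.rpow_add two_pos, Real.rpow_one]
    rw [hinner] at hB
    rw [hdnorm] at hA
    rw [hc]
    linarith [hB, hA]
end

section
/- For all x, y in ℝ^n and 1 < p < 2, there exists c_p > 0 depending only on p such that |y|^p ≥ |x|^p + p |x|^{p-2} ⟨x, y - x⟩ + c_p |x - y|^2 (1 + |x| + |y|)^{p-2}. -/
open Real Set

private lemma mono_aux {p K : ℝ} (hp1 : 1 < p) (hp2 : p < 2) (hK : 0 < K) :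
    MonotoneOn (fun t : ℝ => t ^ (p - 1) - (p - 1) * K ^ (p - 2) * t) (Icc 0 K) := by
  apply monotoneOn_of_deriv_nonneg (convex_Icc 0 K)
  · apply ContinuousOn.sub
    · exact fun t ht =>
        (Real.continuousAt_rpow_const t (p - 1) (Or.inr (by linarith))).continuousWithinAt
    · exact (continuous_const.mul continuous_id).continuousOn
  · intro t ht
    rw [interior_Icc] at ht
    exact ((Real.hasDerivAt_rpow_const (p := p - 1) (Or.inl ht.1.ne')).sub
      ((hasDerivAt_id t).const_mul _)).differentiableAt.differentiableWithinAt
  · intro t ht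
    rw [interior_Icc] at ht
    have hd : HasDerivAt (fun t : ℝ => t ^ (p - 1) - (p - 1) * K ^ (p - 2) * t)
        ((p - 1) * t ^ (p - 1 - 1) - (p - 1) * K ^ (p - 2) * 1) t :=
      (Real.hasDerivAt_rpow_const (p := p - 1) (Or.inl ht.1.ne')).sub
        ((hasDerivAt_id t).const_mul _)
    rw [hd.deriv]
    have h1 : K ^ (p - 2) ≤ t ^ (p - 2) :=
      Real.rpow_le_rpow_of_nonpos ht.1 ht.2.le (by linarith)
    have h2 : p - 1 - 1 = p - 2 := by ring
    rw [h2]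
    nlinarith

private lemma scalar_lemma {p a K : ℝ} (hp1 : 1 < p) (hp2 : p < 2) (ha : 0 ≤ a)
    (haK : a ≤ K) (hK : 0 < K) {t : ℝ} (ht : t ∈ Icc (0:ℝ) K) :
    a ^ p + p * a ^ (p - 1) * (t - a) + (p * (p - 1) / 2) * K ^ (p - 2) * (t - a) ^ 2
      ≤ t ^ p := by
  set g : ℝ → ℝ := fun t =>
    t ^ p - a ^ p - p * a ^ (p - 1) * (t - a) - (p * (p - 1) / 2) * K ^ (p - 2) * (t - a) ^ 2
    with hg
  have hcont : ContinuousOn g (Icc 0 K) := by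
    apply ContinuousOn.sub
    apply ContinuousOn.sub
    apply ContinuousOn.sub
    · exact fun s hs =>
        (Real.continuousAt_rpow_const s p (Or.inr (by linarith))).continuousWithinAt
    · exact continuousOn_const
    · fun_prop
    · fun_prop
  have hderiv : ∀ s : ℝ, 0 < s → HasDerivAt g
      (p * s ^ (p - 1) - p * a ^ (p - 1) - p * (p - 1) * K ^ (p - 2) * (s - a)) s := by
    intro s hs
    have h1 : HasDerivAt (fun t : ℝ => t ^ p) (p * s ^ (p - 1)) s :=
      Real.hasDerivAt_rpow_const (Or.inl hs.ne')
    have h2 : HasDerivAt (fun t : ℝ => p * a ^ (p - 1) * (t - a)) (p * a ^ (p - 1) * 1) s :=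
      ((hasDerivAt_id s).sub_const a).const_mul _
    have h3 : HasDerivAt (fun t : ℝ => (p * (p - 1) / 2) * K ^ (p - 2) * (t - a) ^ 2)
        ((p * (p - 1) / 2) * K ^ (p - 2) * (2 * (s - a))) s := by
      have := (((hasDerivAt_id s).sub_const a).pow 2).const_mul ((p * (p - 1) / 2) * K ^ (p - 2))
      simpa using this
    have := (h1.sub_const (a ^ p)).sub h2 |>.sub h3
    exact this.congr_deriv (by ring)
  have key := mono_aux hp1 hp2 hK
  -- g is antitone on [0,a] and monotone on [a,K]
  have hmono : MonotoneOn g (Icc a K) := by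
    apply monotoneOn_of_deriv_nonneg (convex_Icc a K)
      (hcont.mono (Icc_subset_Icc ha le_rfl))
    · intro s hs
      rw [interior_Icc] at hs
      exact (hderiv s (lt_of_le_of_lt ha hs.1)).differentiableAt.differentiableWithinAt
    · intro s hs
      rw [interior_Icc] at hs
      have hs0 : 0 < s := lt_of_le_of_lt ha hs.1
      rw [(hderiv s hs0).deriv]
      have := key ⟨ha, haK⟩ ⟨hs0.le, hs.2.le⟩ hs.1.le
      simp only at this
      nlinarith
  have hanti : AntitoneOn g (Icc 0 a) := by
    apply antitoneOn_of_deriv_nonpos (convex_Icc 0 a)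
      (hcont.mono (Icc_subset_Icc le_rfl haK))
    · intro s hs
      rw [interior_Icc] at hs
      exact (hderiv s hs.1).differentiableAt.differentiableWithinAt
    · intro s hs
      rw [interior_Icc] at hs
      rw [(hderiv s hs.1).deriv]
      have := key ⟨hs.1.le, le_trans hs.2.le haK⟩ ⟨ha, haK⟩ hs.2.le
      simp only at this
      nlinarith
  have hga : g a = 0 := by simp [hg]
  have h0 : 0 ≤ g t := by
    rcases le_total t a with h | h
    · have := hanti ⟨ht.1, h⟩ ⟨ha, le_rfl⟩ h
      rw [hga] at this; linarith
    · have := hmono ⟨le_rfl, haK⟩ ⟨h, ht.2⟩ h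
      rw [hga] at this; linarith
  simp only [hg] at h0
  linarith

/-- Modulus-of-convexity inequality for `s ↦ |s|^p` in the range `1 < p < 2`. -/
theorem convexity_pow_norm_singular (n : ℕ) (p : ℝ) (hp1 : 1 < p) (hp2 : p < 2) :
    ∃ c : ℝ, 0 < c ∧ ∀ x y : EuclideanSpace ℝ (Fin n),
      ‖x‖ ^ p + p * ‖x‖ ^ (p - 2) * (inner ℝ x (y - x) : ℝ)
          + c * ‖x - y‖ ^ (2 : ℝ) * (1 + ‖x‖ + ‖y‖) ^ (p - 2) ≤ ‖y‖ ^ p := by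
  refine ⟨p * (p - 1) / 2, by nlinarith, fun x y => ?_⟩
  set a := ‖x‖ with hadef
  set b := ‖y‖ with hbdef
  have ha : 0 ≤ a := norm_nonneg x
  have hb : 0 ≤ b := norm_nonneg y
  set K := 1 + a + b with hKdef
  have hK : 0 < K := by positivity
  have haK : a ≤ K := by linarith
  have hbK : b ∈ Icc (0:ℝ) K := ⟨hb, by linarith⟩
  have hscalar := scalar_lemma hp1 hp2 ha haK hK hbK
  -- rewrite inner product
  have hinner : (inner ℝ x (y - x) : ℝ) = (inner ℝ x y : ℝ) - a ^ 2 := by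
    rw [inner_sub_right, real_inner_self_eq_norm_sq]
  have hns : ‖x - y‖ ^ (2:ℝ) = a ^ 2 - 2 * (inner ℝ x y : ℝ) + b ^ 2 := by
    rw [show (2:ℝ) = ((2:ℕ):ℝ) by norm_num, Real.rpow_natCast]
    exact norm_sub_sq_real x y
  have hD : (inner ℝ x y : ℝ) ≤ a * b := real_inner_le_norm x y
  have ha1 : a ^ (p - 1) = a ^ (p - 2) * a := by
    rcases eq_or_lt_of_le ha with h | h
    · rw [← h, Real.zero_rpow (by linarith), Real.zero_rpow (by linarith), mul_zero]
    · have h2 := Real.rpow_add h (p - 2) 1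
      rw [Real.rpow_one] at h2
      rw [show p - 1 = p - 2 + 1 by ring, h2]
  have hkey : p * (p - 1) * (a * b - (inner ℝ x y : ℝ)) * K ^ (p - 2)
      ≤ p * a ^ (p - 2) * (a * b - (inner ℝ x y : ℝ)) := by
    rcases eq_or_lt_of_le ha with h | h
    · have hx0 : x = 0 := by
        rw [← norm_eq_zero]; exact h.symm ▸ rfl
      have ha0 : a = 0 := by rw [hadef, hx0, norm_zero]
      simp [hx0, ha0]
    · have h1 : K ^ (p - 2) ≤ a ^ (p - 2) :=
        Real.rpow_le_rpow_of_nonpos h haK (by linarith)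
      have h2 : 0 ≤ a * b - (inner ℝ x y : ℝ) := by linarith
      have h3 : (0:ℝ) < a ^ (p - 2) := Real.rpow_pos_of_pos h _
      have hD2 : (0:ℝ) ≤ p * (p - 1) * (a * b - (inner ℝ x y : ℝ)) :=
        mul_nonneg (by nlinarith) h2
      calc p * (p - 1) * (a * b - (inner ℝ x y : ℝ)) * K ^ (p - 2)
          ≤ p * (p - 1) * (a * b - (inner ℝ x y : ℝ)) * a ^ (p - 2) :=
            mul_le_mul_of_nonneg_left h1 hD2
        _ ≤ p * a ^ (p - 2) * (a * b - (inner ℝ x y : ℝ)) := by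
            nlinarith [mul_nonneg (mul_nonneg (mul_nonneg
              (by linarith : (0:ℝ) ≤ 2 - p) (by linarith : (0:ℝ) ≤ p)) h2) h3.le]
  rw [hinner, hns]
  have hKp : (0:ℝ) ≤ K ^ (p - 2) := (Real.rpow_pos_of_pos hK _).le
  have e1 : p * a ^ (p - 1) * (b - a) = p * a ^ (p - 2) * (a * b - a ^ 2) := by
    rw [ha1]; ring
  nlinarith [hscalar, hkey, e1]
end

section
/- Let ε > 0, η > 0, G : (0,1) → [G_0, G_1] measurable with 0 < G_0 ≤ G_1, and let R^ε = {(x,y) : x ∈ (0,1), 0 < y < εG(x)}. For u ∈ W^{1,p}(R^ε) with 1 < p < ∞ and ε < 1, define (P_{1+η}u)(x,y) = u(x, y/(1+η)). Then ε^{-1/p} ||u - P_{1+η}u||_{L^p(R^ε)} ≤ ε^{-1/p} ||∂_y u||_{L^p(R^ε)} · (η/(1+η))^{1/p'} · G_1 / p^{1/p}, where p' = p/(p-1). -/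
open MeasureTheory Set

/-- Second partial derivative of a function on `ℝ × ℝ`. -/
noncomputable def pderiv₂ (φ : ℝ × ℝ → ℝ) (q : ℝ × ℝ) : ℝ := fderiv ℝ φ q (0, 1)

lemma slice_pointwise_bound (p η : ℝ) (hp : 1 < p) (hη : 0 < η)
    (u : ℝ × ℝ → ℝ) (hu : Differentiable ℝ u) (x L : ℝ)
    (hgB : IntegrableOn (fun s => |pderiv₂ u (x, s)| ^ p) (Ioo 0 L) volume)
    (y : ℝ) (hy : y ∈ Ioo (0:ℝ) L) :
    |u (x, y) - u (x, y / (1 + η))| ^ p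
      ≤ (η / (1 + η) * y) ^ (p - 1) * ∫ s in Ioo 0 L, |pderiv₂ u (x, s)| ^ p := by
  have hp0 : (0:ℝ) < p := lt_trans one_pos hp
  have h1η : (0:ℝ) < 1 + η := by linarith
  set a := y / (1 + η) with ha
  set g' : ℝ → ℝ := fun s => pderiv₂ u (x, s) with hg'
  have ha0 : 0 < a := div_pos hy.1 h1η
  have hay : a < y := by
    rw [ha, div_lt_iff₀ h1η]
    nlinarith [hy.1]
  have hsub : Icc a y ⊆ Ioo 0 L :=
    fun s hs => ⟨lt_of_lt_of_le ha0 hs.1, lt_of_le_of_lt hs.2 hy.2⟩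
  have hg'm : Measurable g' :=
    (measurable_fderiv_apply_const ℝ u ((0:ℝ), (1:ℝ))).comp
      (measurable_const.prodMk measurable_id)
  -- integrability of g' on Icc a y
  have hint_pow : IntegrableOn (fun s => |g' s| ^ p) (Icc a y) volume := hgB.mono_set hsub
  have hg'int : IntegrableOn g' (Icc a y) volume := by
    refine Integrable.mono' (g := fun s => 1 + |g' s| ^ p)
      ((integrableOn_const measure_Icc_lt_top.ne).add hint_pow)
      hg'm.aestronglyMeasurable.restrict ?_
    filter_upwards with s
    rw [Real.norm_eq_abs]
    rcases le_or_gt (|g' s|) 1 with h | h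
    · have : (0:ℝ) ≤ |g' s| ^ p := Real.rpow_nonneg (abs_nonneg _) _
      linarith
    · have h2 : |g' s| ^ (1:ℝ) ≤ |g' s| ^ p :=
        Real.rpow_le_rpow_of_exponent_le h.le hp.le
      rw [Real.rpow_one] at h2
      linarith
  -- FTC
  have hFTC : u (x, y) - u (x, a) = ∫ s in a..y, g' s := by
    have hd : ∀ s ∈ uIcc a y, HasDerivAt (fun t => u (x, t)) (g' s) s := by
      intro s _
      have h1 : HasDerivAt (fun t : ℝ => ((x, t) : ℝ × ℝ)) ((0:ℝ), (1:ℝ)) s :=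
        (hasDerivAt_const s x).prodMk (hasDerivAt_id s)
      exact (hu (x, s)).hasFDerivAt.comp_hasDerivAt s h1
    have hii : IntervalIntegrable g' volume a y := by
      rw [intervalIntegrable_iff, uIoc_of_le hay.le]
      exact hg'int.mono_set Ioc_subset_Icc_self
    exact (intervalIntegral.integral_eq_sub_of_hasDerivAt hd hii).symm
  -- Hölder
  set q : ℝ := p / (p - 1) with hq
  have hpq : Real.HolderConjugate p q := Real.HolderConjugate.conjExponent hp
  set X : ℝ := ∫ s in Ioc a y, |g' s| ^ p with hX
  have hXnn : 0 ≤ X := setIntegral_nonneg measurableSet_Ioc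
    (fun s _ => Real.rpow_nonneg (abs_nonneg _) _)
  have hIocsub : Ioc a y ⊆ Icc a y := Ioc_subset_Icc_self
  have hmem_f : MemLp g' (ENNReal.ofReal p) (volume.restrict (Ioc a y)) := by
    have hint' : Integrable (fun s => ‖g' s‖ ^ p) (volume.restrict (Ioc a y)) := by
      simpa [Real.norm_eq_abs, IntegrableOn] using hint_pow.mono_set hIocsub
    have hq0 : ENNReal.ofReal p ≠ 0 := by
      simp [ENNReal.ofReal_eq_zero, not_le, hp0]
    have := (memLp_norm_rpow_iff (μ := volume.restrict (Ioc a y))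
      (q := ENNReal.ofReal p) (p := ENNReal.ofReal p)
      hg'm.aestronglyMeasurable.restrict hq0 ENNReal.ofReal_ne_top)
    rw [ENNReal.toReal_ofReal hp0.le, ENNReal.div_self hq0 ENNReal.ofReal_ne_top] at this
    exact this.mp (memLp_one_iff_integrable.mpr hint')
  haveI : IsFiniteMeasure (volume.restrict (Ioc a y)) :=
    ⟨by rw [Measure.restrict_apply_univ]; exact measure_Ioc_lt_top⟩
  have hmem_g : MemLp (fun _ : ℝ => (1:ℝ)) (ENNReal.ofReal q) (volume.restrict (Ioc a y)) :=
    memLp_const 1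
  have hholder := integral_mul_norm_le_Lp_mul_Lq (μ := volume.restrict (Ioc a y))
    hpq hmem_f hmem_g
  have hone : (∫ s in Ioc a y, ‖(1:ℝ)‖ ^ q) = y - a := by
    rw [show (fun _ : ℝ => ‖(1:ℝ)‖ ^ q) = fun _ : ℝ => (1:ℝ) by
      funext s; simp [Real.one_rpow]]
    rw [setIntegral_const, Real.volume_real_Ioc_of_le (by linarith), smul_eq_mul, mul_one]
  have habs : |u (x, y) - u (x, a)| ≤ X ^ (1/p) * (y - a) ^ (1/q) := by
    rw [hFTC, intervalIntegral.integral_of_le hay.le]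
    calc |∫ s in Ioc a y, g' s| ≤ ∫ s in Ioc a y, ‖g' s‖ := by
          simpa [Real.norm_eq_abs] using
            norm_integral_le_integral_norm (μ := volume.restrict (Ioc a y)) g'
      _ = ∫ s in Ioc a y, ‖g' s‖ * ‖(1:ℝ)‖ := by simp
      _ ≤ (∫ s in Ioc a y, ‖g' s‖ ^ p) ^ (1/p) * (∫ s in Ioc a y, ‖(1:ℝ)‖ ^ q) ^ (1/q) := hholder
      _ = X ^ (1/p) * (y - a) ^ (1/q) := by
          rw [hone, hX]; simp [Real.norm_eq_abs]
  have hya : y - a = η / (1 + η) * y := by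
    rw [ha]; field_simp; ring
  have hXle : X ≤ ∫ s in Ioo 0 L, |g' s| ^ p := by
    refine setIntegral_mono_set hgB ?_ (HasSubset.Subset.eventuallyLE (fun s hs => hsub (hIocsub hs)))
    filter_upwards with s using Real.rpow_nonneg (abs_nonneg _) _
  have hBnn : 0 ≤ ∫ s in Ioo 0 L, |g' s| ^ p := setIntegral_nonneg measurableSet_Ioo
    (fun s _ => Real.rpow_nonneg (abs_nonneg _) _)
  have hya0 : (0:ℝ) ≤ y - a := by linarith
  have hrpow : |u (x, y) - u (x, a)| ^ p ≤ (X ^ (1/p) * (y - a) ^ (1/q)) ^ p :=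
    Real.rpow_le_rpow (abs_nonneg _) habs hp0.le
  have hexpand : (X ^ (1/p) * (y - a) ^ (1/q)) ^ p = X * (y - a) ^ (p - 1) := by
    rw [Real.mul_rpow (Real.rpow_nonneg hXnn _) (Real.rpow_nonneg hya0 _),
      ← Real.rpow_mul hXnn, ← Real.rpow_mul hya0,
      one_div_mul_cancel hp0.ne', Real.rpow_one]
    congr 1
    rw [hq]
    have hp1 : p - 1 ≠ 0 := by linarith
    field_simp
  calc |u (x, y) - u (x, a)| ^ p ≤ X * (y - a) ^ (p - 1) := hexpand ▸ hrpow
    _ ≤ (∫ s in Ioo 0 L, |g' s| ^ p) * (y - a) ^ (p - 1) :=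
        mul_le_mul_of_nonneg_right hXle (Real.rpow_nonneg hya0 _)
    _ = (η / (1 + η) * y) ^ (p - 1) * ∫ s in Ioo 0 L, |g' s| ^ p := by
        rw [hya]; ring

/-- Estimate for `u - P_{1+η}u` in `L^p` over the thin domain
`R^ε = {(x,y) : x ∈ (0,1), 0 < y < εG(x)}`, where `(P_{1+η}u)(x,y) = u(x, y/(1+η))`:
`ε^{-1/p} ‖u - P_{1+η}u‖_{L^p(R^ε)}
  ≤ ε^{-1/p} ‖∂_y u‖_{L^p(R^ε)} (η/(1+η))^{1/p'} G₁ / p^{1/p}`. -/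
theorem thin_domain_vertical_translation_estimate
    (p ε η G₀ G₁ : ℝ) (hp : 1 < p) (hε : 0 < ε) (hε1 : ε < 1) (hη : 0 < η)
    (hG₀ : 0 < G₀) (hG₀₁ : G₀ ≤ G₁)
    (G : ℝ → ℝ) (hGm : Measurable G)
    (hGb : ∀ x ∈ Set.Ioo (0 : ℝ) 1, G₀ ≤ G x ∧ G x ≤ G₁)
    (u : ℝ × ℝ → ℝ) (hu : Differentiable ℝ u)
    (R : Set (ℝ × ℝ))
    (hR : R = {q : ℝ × ℝ | q.1 ∈ Set.Ioo (0 : ℝ) 1 ∧ q.2 ∈ Set.Ioo 0 (ε * G q.1)})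
    (hint1 : IntegrableOn (fun q => |u q - u (q.1, q.2 / (1 + η))| ^ p) R volume)
    (hint2 : IntegrableOn (fun q => |pderiv₂ u q| ^ p) R volume) :
    ε ^ (-(1 / p)) * (∫ q in R, |u q - u (q.1, q.2 / (1 + η))| ^ p) ^ (1 / p)
      ≤ ε ^ (-(1 / p)) * (∫ q in R, |pderiv₂ u q| ^ p) ^ (1 / p)
        * (η / (1 + η)) ^ (1 - 1 / p) * G₁ / p ^ (1 / p) := by
  have hp0 : (0:ℝ) < p := lt_trans one_pos hp
  have h1η : (0:ℝ) < 1 + η := by linarith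
  have hG₁ : (0:ℝ) < G₁ := lt_of_lt_of_le hG₀ hG₀₁
  set c : ℝ := η / (1 + η) with hc
  have hc0 : 0 ≤ c := div_nonneg hη.le h1η.le
  set f : ℝ × ℝ → ℝ := fun q => |u q - u (q.1, q.2 / (1 + η))| ^ p with hf
  set g : ℝ × ℝ → ℝ := fun q => |pderiv₂ u q| ^ p with hg
  have hfnn : ∀ q, 0 ≤ f q := fun q => Real.rpow_nonneg (abs_nonneg _) _
  have hgnn : ∀ q, 0 ≤ g q := fun q => Real.rpow_nonneg (abs_nonneg _) _
  -- measurability of R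
  have hRm : MeasurableSet R := by
    rw [hR]
    have h1 : MeasurableSet {q : ℝ × ℝ | 0 < q.1} :=
      measurableSet_lt measurable_const measurable_fst
    have h2 : MeasurableSet {q : ℝ × ℝ | q.1 < 1} :=
      measurableSet_lt measurable_fst measurable_const
    have h3 : MeasurableSet {q : ℝ × ℝ | 0 < q.2} :=
      measurableSet_lt measurable_const measurable_snd
    have h4 : MeasurableSet {q : ℝ × ℝ | q.2 < ε * G q.1} :=
      measurableSet_lt measurable_snd (measurable_const.mul (hGm.comp measurable_fst))
    have : {q : ℝ × ℝ | q.1 ∈ Set.Ioo (0 : ℝ) 1 ∧ q.2 ∈ Set.Ioo 0 (ε * G q.1)}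
        = ({q : ℝ × ℝ | 0 < q.1} ∩ {q | q.1 < 1}) ∩ ({q | 0 < q.2} ∩ {q | q.2 < ε * G q.1}) := by
      ext q
      simp only [Set.mem_setOf_eq, Set.mem_Ioo, Set.mem_inter_iff]
    rw [this]
    exact ((h1.inter h2).inter (h3.inter h4))
  set F : ℝ × ℝ → ℝ := R.indicator f with hF
  set Gg : ℝ × ℝ → ℝ := R.indicator g with hGg
  have hFi : Integrable F volume := (integrable_indicator_iff hRm).mpr hint1
  have hGi : Integrable Gg volume := (integrable_indicator_iff hRm).mpr hint2
  have hFi' : Integrable F ((volume : Measure ℝ).prod volume) := by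
    rwa [← Measure.volume_eq_prod]
  have hGi' : Integrable Gg ((volume : Measure ℝ).prod volume) := by
    rwa [← Measure.volume_eq_prod]
  set Af : ℝ → ℝ := fun x =>
    if x ∈ Set.Ioo (0:ℝ) 1 then ∫ y in Ioo 0 (ε * G x), f (x, y) else 0 with hAf
  set Bf : ℝ → ℝ := fun x =>
    if x ∈ Set.Ioo (0:ℝ) 1 then ∫ y in Ioo 0 (ε * G x), g (x, y) else 0 with hBf
  -- slice descriptions of F and Gg
  have hFslice : ∀ x, (fun y => F (x, y)) =
      if x ∈ Set.Ioo (0:ℝ) 1 then (Ioo 0 (ε * G x)).indicator (fun y => f (x, y)) else 0 := by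
    intro x
    by_cases hx : x ∈ Set.Ioo (0:ℝ) 1
    · rw [if_pos hx]; funext y
      by_cases hy : y ∈ Ioo (0:ℝ) (ε * G x)
      · rw [Set.indicator_of_mem hy, hF, Set.indicator_of_mem (by rw [hR]; exact ⟨hx, hy⟩)]
      · rw [Set.indicator_of_notMem hy, hF, Set.indicator_of_notMem
          (by rw [hR]; exact fun h => hy h.2)]
    · rw [if_neg hx]; funext y
      rw [hF, Set.indicator_of_notMem (by rw [hR]; exact fun h => hx h.1)]; rfl
  have hGslice : ∀ x, (fun y => Gg (x, y)) =
      if x ∈ Set.Ioo (0:ℝ) 1 then (Ioo 0 (ε * G x)).indicator (fun y => g (x, y)) else 0 := by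
    intro x
    by_cases hx : x ∈ Set.Ioo (0:ℝ) 1
    · rw [if_pos hx]; funext y
      by_cases hy : y ∈ Ioo (0:ℝ) (ε * G x)
      · rw [Set.indicator_of_mem hy, hGg, Set.indicator_of_mem (by rw [hR]; exact ⟨hx, hy⟩)]
      · rw [Set.indicator_of_notMem hy, hGg, Set.indicator_of_notMem
          (by rw [hR]; exact fun h => hy h.2)]
    · rw [if_neg hx]; funext y
      rw [hGg, Set.indicator_of_notMem (by rw [hR]; exact fun h => hx h.1)]; rfl
  have hAeq : ∀ x, (∫ y, F (x, y)) = Af x := by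
    intro x
    by_cases hx : x ∈ Set.Ioo (0:ℝ) 1
    · rw [hAf]; simp only [if_pos hx]
      rw [show (fun y => F (x, y)) = (Ioo 0 (ε * G x)).indicator (fun y => f (x, y)) by
        rw [hFslice x, if_pos hx]]
      exact integral_indicator measurableSet_Ioo
    · rw [hAf]; simp only [if_neg hx]
      rw [show (fun y => F (x, y)) = 0 by rw [hFslice x, if_neg hx]]
      exact integral_zero _ _
  have hBeq : ∀ x, (∫ y, Gg (x, y)) = Bf x := by
    intro x
    by_cases hx : x ∈ Set.Ioo (0:ℝ) 1
    · rw [hBf]; simp only [if_pos hx]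
      rw [show (fun y => Gg (x, y)) = (Ioo 0 (ε * G x)).indicator (fun y => g (x, y)) by
        rw [hGslice x, if_pos hx]]
      exact integral_indicator measurableSet_Ioo
    · rw [hBf]; simp only [if_neg hx]
      rw [show (fun y => Gg (x, y)) = 0 by rw [hGslice x, if_neg hx]]
      exact integral_zero _ _
  have hA : (∫ q in R, f q) = ∫ x, Af x := by
    rw [← integral_indicator hRm, ← hF, Measure.volume_eq_prod, integral_prod F hFi']
    exact integral_congr_ae (Filter.Eventually.of_forall hAeq)
  have hB : (∫ q in R, g q) = ∫ x, Bf x := by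
    rw [← integral_indicator hRm, ← hGg, Measure.volume_eq_prod, integral_prod Gg hGi']
    exact integral_congr_ae (Filter.Eventually.of_forall hBeq)
  have hAfi : Integrable Af volume :=
    hFi'.integral_prod_left.congr (Filter.Eventually.of_forall hAeq)
  have hBfi : Integrable Bf volume :=
    hGi'.integral_prod_left.congr (Filter.Eventually.of_forall hBeq)
  have hBfnn : ∀ x, 0 ≤ Bf x := by
    intro x
    rw [hBf]
    by_cases hx : x ∈ Set.Ioo (0:ℝ) 1
    · simp only [if_pos hx]
      exact setIntegral_nonneg measurableSet_Ioo fun y _ => hgnn _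
    · simp only [if_neg hx]; exact le_refl 0
  set C' : ℝ := c ^ (p - 1) * (ε * G₁) ^ p / p with hC'
  have hC'0 : 0 ≤ C' :=
    div_nonneg (mul_nonneg (Real.rpow_nonneg hc0 _)
      (Real.rpow_nonneg (mul_nonneg hε.le hG₁.le) _)) hp0.le
  -- key a.e. bound
  have hkey : ∀ᵐ x, Af x ≤ C' * Bf x := by
    filter_upwards [hFi'.prod_right_ae, hGi'.prod_right_ae] with x hfx hgx
    by_cases hx : x ∈ Set.Ioo (0:ℝ) 1
    · set L : ℝ := ε * G x with hLdef
      have hL0 : 0 < L := mul_pos hε (lt_of_lt_of_le hG₀ (hGb x hx).1)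
      have hLle : L ≤ ε * G₁ := mul_le_mul_of_nonneg_left (hGb x hx).2 hε.le
      have hfx' : IntegrableOn (fun y => f (x, y)) (Ioo 0 L) volume := by
        rw [← integrable_indicator_iff measurableSet_Ioo]
        have := hfx
        rw [hFslice x, if_pos hx] at this
        exact this
      have hgx' : IntegrableOn (fun s => g (x, s)) (Ioo 0 L) volume := by
        rw [← integrable_indicator_iff measurableSet_Ioo]
        have := hgx
        rw [hGslice x, if_pos hx] at this
        exact this
      set Bbar : ℝ := ∫ s in Ioo 0 L, g (x, s) with hBbar
      have hBbarnn : 0 ≤ Bbar := setIntegral_nonneg measurableSet_Ioo fun s _ => hgnn _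
      have hptwise : ∀ y ∈ Ioo (0:ℝ) L,
          f (x, y) ≤ c ^ (p - 1) * y ^ (p - 1) * Bbar := by
        intro y hy
        have := slice_pointwise_bound p η hp hη u hu x L hgx' y hy
        calc f (x, y) ≤ (c * y) ^ (p - 1) * Bbar := this
          _ = c ^ (p - 1) * y ^ (p - 1) * Bbar := by
              rw [Real.mul_rpow hc0 hy.1.le]
      -- integrability of the majorant
      have hrint : IntegrableOn (fun y => c ^ (p - 1) * y ^ (p - 1) * Bbar) (Ioo 0 L) volume := by
        have h1 : IntervalIntegrable (fun y : ℝ => y ^ (p - 1)) volume 0 L :=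
          intervalIntegral.intervalIntegrable_rpow (Or.inl (by linarith))
        have h2 : IntegrableOn (fun y : ℝ => y ^ (p - 1)) (Ioo 0 L) volume := by
          have := h1.1
          exact this.mono_set Ioo_subset_Ioc_self
        exact (h2.const_mul (c ^ (p - 1))).mul_const Bbar
      have hstep : Af x ≤ c ^ (p - 1) * Bbar * (L ^ p / p) := by
        rw [hAf]; simp only [if_pos hx]
        calc (∫ y in Ioo 0 L, f (x, y))
            ≤ ∫ y in Ioo 0 L, c ^ (p - 1) * y ^ (p - 1) * Bbar :=
              setIntegral_mono_on hfx' hrint measurableSet_Ioo hptwise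
          _ = c ^ (p - 1) * Bbar * ∫ y in Ioo 0 L, y ^ (p - 1) := by
              rw [← integral_const_mul]
              exact setIntegral_congr_fun measurableSet_Ioo fun y _ => by ring
          _ = c ^ (p - 1) * Bbar * (L ^ p / p) := by
              congr 1
              rw [← integral_Ioc_eq_integral_Ioo, ← intervalIntegral.integral_of_le hL0.le,
                integral_rpow (Or.inl (by linarith))]
              rw [sub_add_cancel, Real.zero_rpow hp0.ne', sub_zero]
      have hLp : L ^ p ≤ (ε * G₁) ^ p := Real.rpow_le_rpow hL0.le hLle hp0.le
      have : c ^ (p - 1) * Bbar * (L ^ p / p) ≤ c ^ (p - 1) * Bbar * ((ε * G₁) ^ p / p) := by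
        apply mul_le_mul_of_nonneg_left _ (mul_nonneg (Real.rpow_nonneg hc0 _) hBbarnn)
        gcongr
      calc Af x ≤ c ^ (p - 1) * Bbar * (L ^ p / p) := hstep
        _ ≤ c ^ (p - 1) * Bbar * ((ε * G₁) ^ p / p) := this
        _ = C' * Bf x := by
            rw [hC', hBf]; simp only [if_pos hx]; rw [← hLdef, ← hBbar]; ring
    · rw [hAf, hBf]; simp only [if_neg hx, mul_zero]; exact le_refl 0
  have hmain : (∫ q in R, f q) ≤ C' * ∫ q in R, g q := by
    rw [hA, hB, ← integral_const_mul]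
    exact integral_mono_ae hAfi (hBfi.const_mul C') hkey
  -- final algebra
  have hA0 : 0 ≤ ∫ q in R, f q := setIntegral_nonneg hRm fun q _ => hfnn q
  have hB0 : 0 ≤ ∫ q in R, g q := setIntegral_nonneg hRm fun q _ => hgnn q
  set A : ℝ := ∫ q in R, f q with hAdef
  set B : ℝ := ∫ q in R, g q with hBdef
  have h1 : A ^ (1/p) ≤ (C' * B) ^ (1/p) :=
    Real.rpow_le_rpow hA0 hmain (by positivity)
  have hC'rpow : C' ^ (1/p) = c ^ (1 - 1/p) * (ε * G₁) / p ^ (1/p) := by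
    rw [hC', Real.div_rpow (mul_nonneg (Real.rpow_nonneg hc0 _)
        (Real.rpow_nonneg (mul_nonneg hε.le hG₁.le) _)) hp0.le,
      Real.mul_rpow (Real.rpow_nonneg hc0 _) (Real.rpow_nonneg (mul_nonneg hε.le hG₁.le) _),
      ← Real.rpow_mul hc0, ← Real.rpow_mul (mul_nonneg hε.le hG₁.le)]
    rw [show (p - 1) * (1/p) = 1 - 1/p by field_simp, show p * (1/p) = 1 by field_simp,
      Real.rpow_one]
  have h2 : (C' * B) ^ (1/p) = c ^ (1 - 1/p) * (ε * G₁) / p ^ (1/p) * B ^ (1/p) := by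
    rw [Real.mul_rpow hC'0 hB0, hC'rpow]
  have h3 : c ^ (1 - 1/p) * (ε * G₁) / p ^ (1/p) * B ^ (1/p)
      ≤ c ^ (1 - 1/p) * G₁ / p ^ (1/p) * B ^ (1/p) := by
    apply mul_le_mul_of_nonneg_right _ (Real.rpow_nonneg hB0 _)
    have hεG : ε * G₁ ≤ G₁ := by nlinarith
    gcongr
  have h4 : A ^ (1/p) ≤ c ^ (1 - 1/p) * G₁ / p ^ (1/p) * B ^ (1/p) :=
    le_trans h1 (le_trans (le_of_eq h2) h3)
  have hεnn : 0 ≤ ε ^ (-(1/p)) := Real.rpow_nonneg hε.le _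
  calc ε ^ (-(1/p)) * A ^ (1/p)
      ≤ ε ^ (-(1/p)) * (c ^ (1 - 1/p) * G₁ / p ^ (1/p) * B ^ (1/p)) :=
        mul_le_mul_of_nonneg_left h4 hεnn
    _ = ε ^ (-(1/p)) * B ^ (1/p) * c ^ (1 - 1/p) * G₁ / p ^ (1/p) := by ring
end

section
/- Let 1 < p < ∞ and let Y* = {(y₁,y₂) : 0 < y₁ < L, 0 < y₂ < G(y₁)} where G : ℝ → [G_0, G_1] is a C¹ L-periodic function with 0 < G_0 ≤ G_1. Suppose v ∈ W^{1,p}(Y*) satisfies: (v - y₁) belongs to the subspace W^{1,p}_#(Y*) of functions with equal traces on the left and right lateral boundaries, and ∫_{Y*} |∇v|^{p-2} ∇v · ∇φ dy = 0 for all φ ∈ W^{1,p}_#(Y*). Then q := L^{-1} ∫_{Y*} |∇v|^{p-2} ∂_{y₁} v dy₁ dy₂ satisfies q = L^{-1} ∫_{Y*} |∇v|^p dy₁ dy₂ > 0. -/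
open MeasureTheory

/-- First partial derivative of a function on `ℝ × ℝ`. -/
noncomputable def pderiv₁ (φ : ℝ × ℝ → ℝ) (q : ℝ × ℝ) : ℝ := fderiv ℝ φ q (1, 0)

/-- For the solution `v` of the cell problem on
`Y* = {(y₁,y₂) : 0 < y₁ < L, 0 < y₂ < G(y₁)}` (periodicity in `y₁` being encoded by the
`L`-periodic extensions `v(y₁+L,y₂) = v(y₁,y₂) + L` and `φ(y₁+L,y₂) = φ(y₁,y₂)` of
`v - y₁` and of the test functions), the homogenized coefficient satisfies
`q = L⁻¹ ∫_{Y*} |∇v|^{p-2} ∂_{y₁}v = L⁻¹ ∫_{Y*} |∇v|^p > 0`. -/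
theorem cell_problem_coefficient_positive
    (p L G₀ G₁ : ℝ) (hp : 1 < p) (hL : 0 < L) (hG₀ : 0 < G₀) (hG₀₁ : G₀ ≤ G₁)
    (G : ℝ → ℝ) (hG : ContDiff ℝ 1 G) (hGper : ∀ x, G (x + L) = G x)
    (hGb : ∀ x, G₀ ≤ G x ∧ G x ≤ G₁)
    (Y : Set (ℝ × ℝ))
    (hY : Y = {q : ℝ × ℝ | q.1 ∈ Set.Ioo 0 L ∧ q.2 ∈ Set.Ioo 0 (G q.1)})
    (v : ℝ × ℝ → ℝ) (hv : ContDiff ℝ 1 v)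
    (hvper : ∀ q : ℝ × ℝ, v (q.1 + L, q.2) = v q + L)
    (hvar : ∀ φ : ℝ × ℝ → ℝ, ContDiff ℝ 1 φ → (∀ q : ℝ × ℝ, φ (q.1 + L, q.2) = φ q) →
      ∫ q in Y, Real.sqrt ((pderiv₁ v q) ^ 2 + (pderiv₂ v q) ^ 2) ^ (p - 2)
        * (pderiv₁ v q * pderiv₁ φ q + pderiv₂ v q * pderiv₂ φ q) = 0) :
    L⁻¹ * ∫ q in Y, Real.sqrt ((pderiv₁ v q) ^ 2 + (pderiv₂ v q) ^ 2) ^ (p - 2)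
        * pderiv₁ v q
      = L⁻¹ * ∫ q in Y, Real.sqrt ((pderiv₁ v q) ^ 2 + (pderiv₂ v q) ^ 2) ^ p ∧
    0 < L⁻¹ * ∫ q in Y, Real.sqrt ((pderiv₁ v q) ^ 2 + (pderiv₂ v q) ^ 2) ^ p := by
  have hp0 : (0:ℝ) < p := lt_trans one_pos hp
  set a : ℝ × ℝ → ℝ := pderiv₁ v with ha_def
  set b : ℝ × ℝ → ℝ := pderiv₂ v with hb_def
  set n : ℝ × ℝ → ℝ := fun q => Real.sqrt ((a q) ^ 2 + (b q) ^ 2) with hn_def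
  set f : ℝ × ℝ → ℝ := fun q => n q ^ p with hf_def
  set h : ℝ × ℝ → ℝ := fun q => n q ^ (p - 2) * a q with hh_def
  -- continuity facts
  have hvd : Differentiable ℝ v := hv.differentiable one_ne_zero
  have hfd : Continuous (fderiv ℝ v) := hv.continuous_fderiv one_ne_zero
  have ha : Continuous a := hfd.clm_apply continuous_const
  have hb : Continuous b := hfd.clm_apply continuous_const
  have hs : Continuous (fun q => (a q) ^ 2 + (b q) ^ 2) := (ha.pow 2).add (hb.pow 2)
  have hn : Continuous n := hs.sqrt
  have hn0 : ∀ q, 0 ≤ n q := fun q => Real.sqrt_nonneg _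
  have hf : Continuous f := by
    rw [continuous_iff_continuousAt]
    intro q
    exact (Real.continuousAt_rpow_const (n q) p (Or.inr hp0.le)).comp hn.continuousAt
  have hf0 : ∀ q, 0 ≤ f q := fun q => Real.rpow_nonneg (hn0 q) p
  -- |a q| ≤ n q
  have habs : ∀ q, |a q| ≤ n q := by
    intro q
    rw [hn_def, ← Real.sqrt_sq_eq_abs]
    exact Real.sqrt_le_sqrt (le_add_of_nonneg_right (sq_nonneg _))
  -- Y is open
  have hYopen : IsOpen Y := by
    have : Y = ({q : ℝ × ℝ | 0 < q.1} ∩ {q | q.1 < L}) ∩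
        ({q | 0 < q.2} ∩ {q | q.2 < G q.1}) := by
      rw [hY]; ext q; simp only [Set.mem_setOf_eq, Set.mem_inter_iff, Set.mem_Ioo]
    rw [this]
    exact ((isOpen_lt continuous_const continuous_fst).inter
        (isOpen_lt continuous_fst continuous_const)).inter
      ((isOpen_lt continuous_const continuous_snd).inter
        (isOpen_lt continuous_snd (hG.continuous.comp continuous_fst)))
  have hYmeas : MeasurableSet Y := hYopen.measurableSet
  -- Y is contained in a compact set
  set K : Set (ℝ × ℝ) := Set.Icc 0 L ×ˢ Set.Icc 0 G₁ with hK_def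
  have hKc : IsCompact K := isCompact_Icc.prod isCompact_Icc
  have hYK : Y ⊆ K := by
    intro q hq
    rw [hY] at hq
    obtain ⟨⟨h1, h2⟩, h3, h4⟩ := hq
    exact ⟨⟨h1.le, h2.le⟩, h3.le, le_trans h4.le (hGb q.1).2⟩
  have hμY : volume Y < ⊤ := lt_of_le_of_lt (measure_mono hYK) hKc.measure_lt_top
  -- integrability of f
  have hfint : IntegrableOn f Y := (hf.continuousOn.integrableOn_compact hKc).mono_set hYK
  -- bound for n on Y
  obtain ⟨C, hC⟩ := hKc.exists_bound_of_continuousOn hn.continuousOn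
  set C' : ℝ := max C 0 with hC'_def
  have hnC : ∀ q ∈ Y, n q ≤ C' := by
    intro q hq
    calc n q ≤ |n q| := le_abs_self _
    _ = ‖n q‖ := rfl
    _ ≤ C := hC q (hYK hq)
    _ ≤ C' := le_max_left _ _
  have hC'0 : 0 ≤ C' := le_max_right _ _
  -- integrability of h
  have hhmeas : Measurable h := ((hn.measurable.pow_const (p-2))).mul ha.measurable
  have hhbound : ∀ q ∈ Y, ‖h q‖ ≤ C' ^ (p - 1) := by
    intro q hq
    rw [hh_def]
    rcases eq_or_lt_of_le (hn0 q) with hq0 | hq0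
    · have ha0 : a q = 0 := by
        have := habs q
        rw [← hq0] at this
        exact abs_eq_zero.mp (le_antisymm this (abs_nonneg _))
      simp [ha0, Real.rpow_nonneg hC'0]
    · have : ‖n q ^ (p - 2) * a q‖ ≤ n q ^ (p - 2) * n q := by
        rw [norm_mul, Real.norm_eq_abs, Real.norm_eq_abs,
          abs_of_nonneg (Real.rpow_nonneg (hn0 q) _)]
        exact mul_le_mul_of_nonneg_left (habs q) (Real.rpow_nonneg (hn0 q) _)
      refine le_trans this ?_
      have : n q ^ (p - 2) * n q = n q ^ (p - 1) := by
        nth_rewrite 2 [← Real.rpow_one (n q)]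
        rw [← Real.rpow_add hq0]
        congr 1
        ring
      rw [this]
      exact Real.rpow_le_rpow (hn0 q) (hnC q hq) (by linarith)
  have hhint : IntegrableOn h Y := by
    refine Integrable.mono' (g := fun _ => C' ^ (p - 1))
      (integrableOn_const hμY.ne) hhmeas.aestronglyMeasurable ?_
    exact ae_restrict_of_forall_mem hYmeas hhbound
  -- the variational identity with test function φ = v - y₁
  set φ : ℝ × ℝ → ℝ := fun q => v q - q.1 with hφ_def
  have hφc : ContDiff ℝ 1 φ := hv.sub contDiff_fst
  have hφper : ∀ q : ℝ × ℝ, φ (q.1 + L, q.2) = φ q := by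
    intro q
    simp only [hφ_def, hvper q]
    ring
  have hφ1 : ∀ q, pderiv₁ φ q = a q - 1 := by
    intro q
    have hd : HasFDerivAt φ (fderiv ℝ v q - ContinuousLinearMap.fst ℝ ℝ ℝ) q :=
      (hvd q).hasFDerivAt.sub hasFDerivAt_fst
    simp [pderiv₁, hd.fderiv, ha_def]
  have hφ2 : ∀ q, pderiv₂ φ q = b q := by
    intro q
    have hd : HasFDerivAt φ (fderiv ℝ v q - ContinuousLinearMap.fst ℝ ℝ ℝ) q :=
      (hvd q).hasFDerivAt.sub hasFDerivAt_fst
    simp [pderiv₂, hd.fderiv, hb_def]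
  have hkey : ∫ q in Y, (f q - h q) = 0 := by
    rw [← hvar φ hφc hφper]
    apply integral_congr_ae
    filter_upwards with q
    rw [hφ1 q, hφ2 q]
    show f q - h q = n q ^ (p - 2) * (a q * (a q - 1) + b q * b q)
    have hexp : n q ^ (p - 2) * ((a q) ^ 2 + (b q) ^ 2) = f q := by
      rcases eq_or_lt_of_le (hn0 q) with hq0 | hq0
      · have hsq : (a q) ^ 2 + (b q) ^ 2 = 0 := by
          have := Real.sq_sqrt (by positivity : (0:ℝ) ≤ (a q)^2 + (b q)^2)
          rw [hn_def] at hq0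
          simp only at hq0
          rw [← this, ← hq0]
          norm_num
        rw [hsq, mul_zero, hf_def]
        simp only
        rw [← hq0, Real.zero_rpow hp0.ne']
      · have hsq : (a q) ^ 2 + (b q) ^ 2 = n q ^ (2:ℕ) :=
          (Real.sq_sqrt (by positivity)).symm
        rw [hsq, ← Real.rpow_natCast (n q) 2, ← Real.rpow_add hq0]
        norm_num
        rfl
    rw [← hexp]
    ring
  have hint_eq : ∫ q in Y, h q = ∫ q in Y, f q := by
    have := integral_sub hfint hhint
    rw [this] at hkey
    linarith
  -- positivity
  have hexists : ∃ q₀ ∈ Y, 0 < n q₀ := by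
    by_contra hcon
    push_neg at hcon
    have hzero : ∀ q ∈ Y, fderiv ℝ v q = 0 := by
      intro q hq
      have hnq : n q = 0 := le_antisymm (hcon q hq) (hn0 q)
      have hsq : (a q) ^ 2 + (b q) ^ 2 = 0 := by
        have := Real.sq_sqrt (by positivity : (0:ℝ) ≤ (a q)^2 + (b q)^2)
        rw [hn_def] at hnq
        simp only at hnq
        rw [← this, hnq]
        norm_num
      have ha0 : a q = 0 := by nlinarith [sq_nonneg (a q), sq_nonneg (b q)]
      have hb0 : b q = 0 := by nlinarith [sq_nonneg (a q), sq_nonneg (b q)]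
      refine ContinuousLinearMap.ext fun z => ?_
      have hz : (z : ℝ × ℝ) = z.1 • ((1:ℝ), (0:ℝ)) + z.2 • ((0:ℝ), (1:ℝ)) := by
        ext <;> simp
      have h1 : fderiv ℝ v q (1, 0) = 0 := ha0
      have h2 : fderiv ℝ v q (0, 1) = 0 := hb0
      rw [ContinuousLinearMap.zero_apply, hz, map_add,
        (fderiv ℝ v q).map_smul, (fderiv ℝ v q).map_smul, h1, h2]
      simp
    -- v is constant on the strip S
    set S : Set (ℝ × ℝ) := Set.Ioo 0 L ×ˢ Set.Ioo 0 G₀ with hS_def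
    have hSY : S ⊆ Y := by
      intro q hq
      rw [hY]
      obtain ⟨h1, h2, h3⟩ := hq
      exact ⟨h1, h2, lt_of_lt_of_le h3 (hGb q.1).1⟩
    have hSopen : IsOpen S := isOpen_Ioo.prod isOpen_Ioo
    have hSconv : Convex ℝ S := (convex_Ioo 0 L).prod (convex_Ioo 0 G₀)
    set c : ℝ := v (L/2, G₀/2) with hc_def
    have hmem : ((L/2, G₀/2) : ℝ × ℝ) ∈ S :=
      ⟨⟨by linarith, by linarith⟩, by linarith, by linarith⟩
    have hconst : Set.EqOn v (fun _ => c) S := by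
      intro x hx
      exact hSconv.is_const_of_fderivWithin_eq_zero hvd.differentiableOn
        (fun z hz => by rw [fderivWithin_of_isOpen hSopen hz]; exact hzero z (hSY hz))
        hx hmem
    have hclos : Set.EqOn v (fun _ => c) (closure S) :=
      hconst.closure hv.continuous continuous_const
    have hclS : closure S = Set.Icc 0 L ×ˢ Set.Icc 0 G₀ := by
      rw [hS_def, closure_prod_eq, closure_Ioo hL.ne, closure_Ioo hG₀.ne]
    have hm0 : ((0, G₀/2) : ℝ × ℝ) ∈ closure S := by
      rw [hclS]
      exact ⟨⟨le_refl 0, hL.le⟩, by constructor <;> linarith⟩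
    have hmL : ((L, G₀/2) : ℝ × ℝ) ∈ closure S := by
      rw [hclS]
      exact ⟨⟨hL.le, le_refl L⟩, by constructor <;> linarith⟩
    have e1 : v (0, G₀/2) = c := hclos hm0
    have e2 : v (L, G₀/2) = c := hclos hmL
    have := hvper (0, G₀/2)
    simp only [zero_add] at this
    rw [e1, e2] at this
    linarith
  obtain ⟨q₀, hq₀Y, hq₀⟩ := hexists
  have hfq₀ : 0 < f q₀ := Real.rpow_pos_of_pos hq₀ p
  have hfpos : 0 < ∫ q in Y, f q := by
    rw [setIntegral_pos_iff_support_of_nonneg_ae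
      (ae_restrict_of_forall_mem hYmeas (fun q _ => hf0 q)) hfint]
    set U : Set (ℝ × ℝ) := (f ⁻¹' Set.Ioi 0) ∩ Y with hU_def
    have hUopen : IsOpen U := (hf.isOpen_preimage _ isOpen_Ioi).inter hYopen
    have hUne : U.Nonempty := ⟨q₀, hfq₀, hq₀Y⟩
    refine lt_of_lt_of_le (hUopen.measure_pos volume hUne) (measure_mono ?_)
    intro q hq
    exact ⟨ne_of_gt hq.1, hq.2⟩
  constructor
  · rw [hint_eq]
  · exact mul_pos (inv_pos.mpr hL) hfpos
end
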